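/- A string w is primitive if and only if w occurs exactly twice as a substring in w·w (namely only as a prefix and as a suffix). -/

import Mathlib

/-- Strings over the binary alphabet `{a, b}`: `false` is `a`, `true` is `b`. -/
abbrev Word := List Bool

/-- `w` is primitive if it is not of the form `x^j` for any `j ≥ 2`. -/
def Primitive (w : Word) : Prop := ¬ ∃ (x : Word) (j : ℕ), 2 ≤ j ∧ w = (List.replicate j x).flatten

/-- `u` occurs in `w` at (0-indexed) position `i`. -/
def occursAt (u w : Word) (i : ℕ) : Prop :=
  i + u.length ≤ w.length ∧ (w.drop i).take u.length = u

instance (u w : Word) (i : ℕ) : Decidable (occursAt u w i) := by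
  unfold occursAt; infer_instance

/-- Fibonacci words: `F 1 = b`, `F 2 = a`, `F (k+1) = F k ++ F (k-1)`. -/
def F : ℕ → Word
  | 0 => []
  | 1 => [true]
  | 2 => [false]
  | (n+3) => F (n+2) ++ F (n+1)

/-- Fibonacci numbers with `f 1 = f 2 = 1`. -/
def f : ℕ → ℕ
  | 0 => 0
  | 1 => 1
  | (n+2) => f (n+1) + f n

/-- The morphism `φ(a) = aab`, `φ(b) = ab`. -/
def phi (w : Word) : Word := w.flatMap fun c => if c then [false, true] else [false, false, true]

/-- Lexicographic order on words induced by `a < b` (a proper prefix is smaller). -/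
def wlt (x y : Word) : Prop := List.Lex (· < ·) x y

/-- `u` is a border of `w`: a proper substring that is both a prefix and a suffix. -/
def IsBorder (u w : Word) : Prop := u ≠ w ∧ u <+: w ∧ u <:+ w

/-- `w` is a Lyndon word: it is smaller than all of its proper nonempty suffixes. -/
def IsLyndon (w : Word) : Prop := ∀ s : Word, s <:+ w → s ≠ [] → s ≠ w → wlt w s

/-- `fs` is the Lyndon factorization of `w`: a factorization into nonempty Lyndon
words that is lexicographically non-increasing (powers written as repetitions). -/
def IsLyndonFactorization (w : Word) (fs : List Word) : Prop :=
  fs.flatten = w ∧ (∀ x ∈ fs, IsLyndon x ∧ x ≠ []) ∧ List.Chain' (fun x y => ¬ wlt x y) fs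

/-- `ℓ 1 = ab`, `ℓ (k+1) = φ (ℓ k)`. -/
def ell : ℕ → Word
  | 0 => []
  | 1 => [false, true]
  | (n+2) => phi (ell (n+1))

lemma rep_split (x : Word) (k m : ℕ) :
    (List.replicate (k + m) x).flatten
      = (List.replicate k x).flatten ++ (List.replicate m x).flatten := by
  rw [List.replicate_add, List.flatten_append]

lemma rep_len (x : Word) (k : ℕ) :
    ((List.replicate k x).flatten).length = k * x.length := by
  simp [List.length_flatten, List.map_replicate, List.sum_replicate, smul_eq_mul]

lemma comm_pow_aux : ∀ n : ℕ, ∀ u v : Word, u.length + v.length ≤ n → u ++ v = v ++ u →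
    ∃ (x : Word) (k m : ℕ), u = (List.replicate k x).flatten ∧
      v = (List.replicate m x).flatten := by
  intro n
  induction n with
  | zero =>
    intro u v hlen _
    have hu : u = [] := List.length_eq_zero_iff.mp (by omega)
    have hv : v = [] := List.length_eq_zero_iff.mp (by omega)
    exact ⟨[], 0, 0, by simp [hu], by simp [hv]⟩
  | succ n ih =>
    intro u v hlen h
    rcases eq_or_ne u [] with rfl | hu
    · exact ⟨v, 0, 1, by simp, by simp⟩
    rcases eq_or_ne v [] with rfl | hv
    · exact ⟨u, 1, 0, by simp, by simp⟩
    rcases le_total u.length v.length with hle | hle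
    · have htake : u = v.take u.length := by
        have h1 := congrArg (List.take u.length) h
        rw [List.take_left, List.take_append_of_le_length hle] at h1
        exact h1
      set t := v.drop u.length with ht
      have hv' : v = u ++ t := by
        conv_lhs => rw [← List.take_append_drop u.length v]
        rw [← htake]
      have hcomm : u ++ t = t ++ u := by
        have : u ++ (u ++ t) = (u ++ t) ++ u := by rw [← hv']; exact h
        rw [List.append_assoc] at this
        exact List.append_cancel_left this
      have hul : 1 ≤ u.length := by
        cases u with
        | nil => exact absurd rfl hu
        | cons a t => simp
      have hlen' : u.length + t.length ≤ n := by
        have : u.length + t.length = v.length := by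
          rw [hv']; simp
        omega
      obtain ⟨x, k, m, hu1, ht1⟩ := ih u t hlen' hcomm
      exact ⟨x, k, k + m, hu1, by rw [hv', rep_split, ← hu1, ← ht1]⟩
    · have htake : v = u.take v.length := by
        have h1 := congrArg (List.take v.length) h
        rw [List.take_left, List.take_append_of_le_length hle] at h1
        exact h1.symm
      set t := u.drop v.length with ht
      have hu' : u = v ++ t := by
        conv_lhs => rw [← List.take_append_drop v.length u]
        rw [← htake]
      have hcomm : v ++ t = t ++ v := by
        have : v ++ (v ++ t) = (v ++ t) ++ v := by rw [← hu']; exact h.symm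
        rw [List.append_assoc] at this
        exact List.append_cancel_left this
      have hvl : 1 ≤ v.length := by
        cases v with
        | nil => exact absurd rfl hv
        | cons a t => simp
      have hlen' : v.length + t.length ≤ n := by
        have : v.length + t.length = u.length := by
          rw [hu']; simp
        omega
      obtain ⟨x, k, m, hv1, ht1⟩ := ih v t hlen' hcomm
      exact ⟨x, k + m, k, by rw [hu', rep_split, ← hv1, ← ht1], hv1⟩

lemma comm_pow (u v : Word) (h : u ++ v = v ++ u) :
    ∃ (x : Word) (k m : ℕ), u = (List.replicate k x).flatten ∧
      v = (List.replicate m x).flatten :=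
  comm_pow_aux (u.length + v.length) u v le_rfl h

lemma occ_zero (w : Word) : occursAt w (w ++ w) 0 := by
  refine ⟨by simp, ?_⟩
  simp [List.take_left]

lemma occ_len (w : Word) : occursAt w (w ++ w) w.length := by
  refine ⟨by simp, ?_⟩
  rw [List.drop_left, List.take_length]


/-- A string `w` is primitive iff `w` occurs exactly twice in `w ++ w`. -/
theorem stmt0 (w : Word) :
    Primitive w ↔
      ((Finset.range (2 * w.length + 1)).filter (fun i => occursAt w (w ++ w) i)).card = 2 := by
  constructor
  · intro hp
    have hw : w ≠ [] := by
      rintro rfl; exact hp ⟨[], 2, le_rfl, by simp⟩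
    have hn0 : 0 < w.length := List.length_pos_iff.mpr hw
    have hset : (Finset.range (2 * w.length + 1)).filter (fun i => occursAt w (w ++ w) i)
        = {0, w.length} := by
      ext i
      simp only [Finset.mem_filter, Finset.mem_range, Finset.mem_insert, Finset.mem_singleton]
      constructor
      · rintro ⟨hi, hocc⟩
        by_contra hcon
        push_neg at hcon
        obtain ⟨h0, hN⟩ := hcon
        have hin : i ≤ w.length := by
          have := hocc.1; simp at this; omega
        have hilt : i < w.length := lt_of_le_of_ne hin hN
        have hipos : 0 < i := Nat.pos_of_ne_zero h0
        have hd : (w ++ w).drop i = w.drop i ++ w :=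
          List.drop_append_of_le_length (le_of_lt hilt)
        have hlen_drop : (w.drop i).length = w.length - i := by simp
        have htk : ((w ++ w).drop i).take w.length = w.drop i ++ w.take i := by
          rw [hd, List.take_append, hlen_drop,
            List.take_of_length_le (by omega)]
          congr 1
          congr 1
          omega
        have hkey : w.drop i ++ w.take i = w := by
          rw [← htk]; exact hocc.2
        have hcomm : w.take i ++ w.drop i = w.drop i ++ w.take i := by
          rw [hkey, List.take_append_drop]
        obtain ⟨x, k, m, hu1, hv1⟩ := comm_pow _ _ hcomm
        have hkpos : 0 < k := by
          rcases Nat.eq_zero_or_pos k with rfl | h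
          · have h' := congrArg List.length hu1
            rw [List.length_take, rep_len, Nat.zero_mul] at h'
            omega
          · exact h
        have hmpos : 0 < m := by
          rcases Nat.eq_zero_or_pos m with rfl | h
          · have h' := congrArg List.length hv1
            rw [List.length_drop, rep_len, Nat.zero_mul] at h'
            omega
          · exact h
        exact hp ⟨x, k + m, by omega, by
          rw [rep_split, ← hu1, ← hv1, List.take_append_drop]⟩
      · rintro (rfl | rfl)
        · exact ⟨by omega, occ_zero w⟩
        · exact ⟨by omega, occ_len w⟩
    rw [hset]
    rw [Finset.card_insert_of_notMem (by simp only [Finset.mem_singleton]; omega)]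
    simp
  · intro hcard
    by_contra hnp
    unfold Primitive at hnp
    push_neg at hnp
    obtain ⟨x, j, hj, hw⟩ := hnp
    rcases eq_or_ne x [] with rfl | hx
    · have hw0 : w = [] := by simp [hw]
      subst hw0
      exact absurd hcard (by decide)
    · have hxl : 0 < x.length := List.length_pos_iff.mpr hx
      have hwl : w.length = j * x.length := by rw [hw, rep_len]
      obtain ⟨p, rfl⟩ : ∃ p, j = p + 2 := ⟨j - 2, by omega⟩
      have hsplit : w = x ++ (List.replicate (p + 1) x).flatten := by
        rw [hw, show p + 2 = 1 + (p + 1) by ring, rep_split]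
        simp
      have hocc_mid : occursAt w (w ++ w) x.length := by
        constructor
        · simp [hwl]; nlinarith
        · have hd : (w ++ w).drop x.length = (List.replicate (p + 1) x).flatten ++ w := by
            conv_lhs => rw [hsplit]
            rw [List.append_assoc, ← hsplit]
            rw [show (x ++ ((List.replicate (p+1) x).flatten ++ w)).drop x.length
              = ((List.replicate (p+1) x).flatten ++ w) from List.drop_left]
          rw [hd, List.take_append, rep_len,
            List.take_of_length_le (by rw [rep_len]; simp [hwl]; nlinarith)]
          have h1 : w.length - (p + 1) * x.length = x.length := by
            rw [hwl]; ring_nf; omega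
          rw [h1]
          have h2 : w.take x.length = x := by
            conv_lhs => rw [hsplit]
            exact List.take_left
          rw [h2]
          rw [hw, show p + 2 = (p + 1) + 1 from rfl, rep_split]
          rw [show p + 1 + 1 = p + 2 from rfl, rep_split x p 2]
          simp [List.replicate_succ]
      have hxlt : x.length < w.length := by rw [hwl]; nlinarith
      have hsub : ({0, x.length, w.length} : Finset ℕ) ⊆
          (Finset.range (2 * w.length + 1)).filter (fun i => occursAt w (w ++ w) i) := by
        intro i hi
        simp only [Finset.mem_insert, Finset.mem_singleton] at hi
        rcases hi with rfl | rfl | rfl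
        · exact Finset.mem_filter.mpr ⟨Finset.mem_range.mpr (by omega), occ_zero w⟩
        · exact Finset.mem_filter.mpr ⟨Finset.mem_range.mpr (by omega), hocc_mid⟩
        · exact Finset.mem_filter.mpr ⟨Finset.mem_range.mpr (by omega), occ_len w⟩
      have hc : ({0, x.length, w.length} : Finset ℕ).card = 3 := by
        have m1 : (0:ℕ) ∉ ({x.length, w.length} : Finset ℕ) := by
          simp only [Finset.mem_insert, Finset.mem_singleton]
          omega
        have m2 : x.length ∉ ({w.length} : Finset ℕ) := by
          simp only [Finset.mem_singleton]
          omega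
        rw [Finset.card_insert_of_notMem m1, Finset.card_insert_of_notMem m2,
          Finset.card_singleton]
      have h3 := Finset.card_le_card hsub
      rw [hc] at h3
      omega
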